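/- Let q be a power of an odd prime with q ≡ 1 (mod 3), and let S be a multiplicative character of F_q whose order is neither 1, 3, nor 4. Let χ₃ be a character of order 3 and φ the quadratic character. Then (Σ_{x∈F_q} S((x-1)(x²+1/3)))² = q²·S(64/729)·(C(S,χ₃)+C(S,χ₃²))², where C(A,B) = B(-1)·J(A,B̄)/q. -/

import Mathlib

open Finset

/-- The Jacobi sum of two multiplicative characters. -/
noncomputable def jacSum {F : Type*} [Field F] [Fintype F] (A B : MulChar F ℂ) : ℂ :=
  ∑ x : F, A x * B (1 - x)

/-- Greene's binomial coefficient `C(A,B) = B(-1)/q · J(A, B⁻¹)`. -/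
noncomputable def greeneBinom {F : Type*} [Field F] [Fintype F] (A B : MulChar F ℂ) : ℂ :=
  B (-1) / (Fintype.card F : ℂ) * jacSum A B⁻¹

section Aux

variable {F : Type*} [Field F] [Fintype F]

lemma aux_prime_ne_zero {p : ℕ} (hp : p.Prime) (h : ¬ (p ∣ Fintype.card F)) :
    ((p : ℕ) : F) ≠ 0 := by
  intro h0
  haveI := ringChar.charP F
  have hd : ringChar F ∣ p := (CharP.cast_eq_zero_iff F (ringChar F) p).mp h0
  have hch : (ringChar F).Prime := CharP.char_is_prime F (ringChar F)
  have hep : ringChar F = p := (Nat.prime_dvd_prime_iff_eq hch hp).mp hd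
  obtain ⟨n, hn⟩ := FiniteField.card F (ringChar F)
  exact h (hn.2 ▸ hep ▸ dvd_pow_self (ringChar F) n.ne_zero)

lemma aux_cube_of_char_eq_one (χ₃ : MulChar F ℂ) (hχ₃ : orderOf χ₃ = 3)
    {t : F} (ht : t ≠ 0) (h1 : χ₃ t = 1) : ∃ y : F, y ^ 3 = t := by
  classical
  have h3q : (3 : ℕ) ∣ Fintype.card Fˣ := by
    have := MulChar.orderOf_dvd_card_sub_one F χ₃
    rw [hχ₃] at this
    rwa [Fintype.card_units]
  haveI : Fact (Nat.Prime 3) := ⟨by norm_num⟩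
  obtain ⟨a, ha⟩ := exists_prime_orderOf_dvd_card 3 h3q
  have hprim : IsPrimitiveRoot a 3 := ha ▸ IsPrimitiveRoot.orderOf a
  have hχpow : χ₃ ^ 3 = 1 := hχ₃ ▸ pow_orderOf_eq_one χ₃
  have hcard3 : Nat.card (rootsOfUnity 3 F) = 3 := by
    exact hprim.card_rootsOfUnity'
  set f : Fˣ →* Fˣ := powMonoidHom 3 with hf
  have hker : f.ker = rootsOfUnity 3 F := by
    ext x
    simp [MonoidHom.mem_ker, hf, powMonoidHom_apply, mem_rootsOfUnity]
  set g : Fˣ →* ℂˣ := χ₃.toUnitHom with hg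
  have hgval : ∀ x : Fˣ, ((g x : ℂˣ) : ℂ) = χ₃ x := fun x => MulChar.coe_toUnitHom χ₃ x
  have hg3 : ∀ x : Fˣ, (g x) ^ 3 = 1 := by
    intro x
    ext
    push_cast [hgval]
    rw [← MulChar.pow_apply' χ₃ (by norm_num) (x : F), hχpow, MulChar.one_apply_coe]
  have hrange_le : g.range ≤ rootsOfUnity 3 ℂ := by
    rintro _ ⟨x, rfl⟩
    rw [mem_rootsOfUnity]
    exact hg3 x
  have hrange_card : Nat.card g.range = 3 := by
    have hdvd : Nat.card g.range ∣ 3 := by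
      have h3' : Nat.card (rootsOfUnity 3 ℂ) = 3 := by
        exact Complex.card_rootsOfUnity 3
      have := Subgroup.card_dvd_of_le hrange_le
      rwa [h3'] at this
    rcases (Nat.prime_three).eq_one_or_self_of_dvd _ hdvd with h | h
    · exfalso
      have hb : g.range = ⊥ := Subgroup.card_eq_one.mp h
      have hone : χ₃ = 1 := by
        have h1' : MulChar.equivToUnitHom χ₃ = MulChar.equivToUnitHom 1 := by
          apply MonoidHom.ext
          intro x
          have hx : g x ∈ g.range := ⟨x, rfl⟩
          rw [hb, Subgroup.mem_bot] at hx
          rw [hg, MulChar.toUnitHom_eq] at hx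
          rw [hx]
          ext
          rw [MulChar.coe_equivToUnitHom, MulChar.one_apply_coe, Units.val_one]
        exact MulChar.equivToUnitHom.injective h1'
      rw [hone, orderOf_one] at hχ₃
      norm_num at hχ₃
    · exact h
  have e1 : 3 * Nat.card f.range = Nat.card Fˣ := by
    have := Subgroup.card_mul_index f.ker
    rwa [Subgroup.index_ker, hker, hcard3] at this
  have e2 : Nat.card g.ker * 3 = Nat.card Fˣ := by
    have := Subgroup.card_mul_index g.ker
    rwa [Subgroup.index_ker, hrange_card] at this
  have hle : f.range ≤ g.ker := by
    rintro _ ⟨y, rfl⟩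
    rw [MonoidHom.mem_ker]
    have : f y = y ^ 3 := rfl
    rw [this, map_pow]
    exact hg3 y
  have heq : f.range = g.ker := by
    refine Subgroup.eq_of_le_of_card_ge hle ?_
    omega
  have hu : IsUnit t := isUnit_iff_ne_zero.mpr ht
  have hmem : hu.unit ∈ g.ker := by
    rw [MonoidHom.mem_ker]
    ext
    rw [hgval, IsUnit.unit_spec, h1, Units.val_one]
  rw [← heq] at hmem
  obtain ⟨v, hv⟩ := hmem
  refine ⟨(v : F), ?_⟩
  have : ((f v : Fˣ) : F) = t := by rw [hv, IsUnit.unit_spec]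
  rw [← this]
  push_cast [hf, powMonoidHom_apply]
  ring



lemma aux_count [DecidableEq F] (χ₃ : MulChar F ℂ) (hχ₃ : orderOf χ₃ = 3) (t : F) :
    ((univ.filter fun y : F => y ^ 3 = t).card : ℂ)
      = (if t = 0 then 1 else 0) + ∑ j ∈ range 3, (χ₃ ^ j) t := by
  have hχpow : χ₃ ^ 3 = 1 := hχ₃ ▸ pow_orderOf_eq_one χ₃
  rcases eq_or_ne t 0 with rfl | ht
  · have hfil : (univ.filter fun y : F => y ^ 3 = (0:F)) = {0} := by
      ext y
      simp [pow_eq_zero_iff (three_ne_zero : (3:ℕ) ≠ 0)]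
    rw [hfil]
    have : ∀ j ∈ range 3, (χ₃ ^ j) (0 : F) = 0 := by
      intro j _
      exact MulChar.map_nonunit _ (by simp)
    rw [Finset.sum_congr rfl this]
    simp
  · -- t ≠ 0
    have h3q : (3 : ℕ) ∣ Fintype.card Fˣ := by
      have := MulChar.orderOf_dvd_card_sub_one F χ₃
      rw [hχ₃] at this
      rwa [Fintype.card_units]
    haveI : Fact (Nat.Prime 3) := ⟨by norm_num⟩
    obtain ⟨a, ha⟩ := exists_prime_orderOf_dvd_card 3 h3q
    have hprim : IsPrimitiveRoot ((a : Fˣ) : F) 3 :=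
      IsPrimitiveRoot.coe_units_iff.mpr (ha ▸ IsPrimitiveRoot.orderOf a)
    set z : ℂ := χ₃ t with hz
    have hterm : ∀ j ∈ range 3, (χ₃ ^ j) t = z ^ j := by
      intro j _
      rcases Nat.eq_zero_or_pos j with rfl | hj
      · rw [pow_zero, pow_zero, MulChar.one_apply (isUnit_iff_ne_zero.mpr ht)]
      · rw [MulChar.pow_apply' _ hj.ne' t]
    rw [Finset.sum_congr rfl hterm, if_neg ht, zero_add]
    have hz3 : z ^ 3 = 1 := by
      rw [hz, ← MulChar.pow_apply' _ (by norm_num : (3:ℕ) ≠ 0), hχpow,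
        MulChar.one_apply (isUnit_iff_ne_zero.mpr ht)]
    have hsum : ∑ j ∈ range 3, z ^ j = 1 + z + z ^ 2 := by
      rw [Finset.sum_range_succ, Finset.sum_range_succ, Finset.sum_range_one]
      ring
    rw [hsum]
    by_cases hcube : ∃ y : F, y ^ 3 = t
    · obtain ⟨y, hy⟩ := hcube
      have hy0 : y ≠ 0 := by
        intro h
        rw [h] at hy
        simp at hy
        exact ht hy.symm
      have hz1 : z = 1 := by
        rw [hz, ← hy, map_pow, ← MulChar.pow_apply' _ (by norm_num : (3:ℕ) ≠ 0), hχpow,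
          MulChar.one_apply (isUnit_iff_ne_zero.mpr hy0)]
      have himg : (univ.filter fun x : F => x ^ 3 = t)
          = (Polynomial.nthRootsFinset 3 (1 : F)).image (· * y) := by
        ext x
        simp only [mem_filter, mem_univ, true_and, mem_image]
        constructor
        · intro hx
          refine ⟨x * y⁻¹, ?_, by field_simp⟩
          rw [Polynomial.mem_nthRootsFinset (by norm_num) (1 : F)]
          rw [mul_pow, hx, ← hy, inv_pow, mul_inv_cancel₀ (pow_ne_zero _ hy0)]
        · rintro ⟨u, hu, rfl⟩
          rw [Polynomial.mem_nthRootsFinset (by norm_num) (1 : F)] at hu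
          rw [mul_pow, hu, one_mul, hy]
      rw [himg, Finset.card_image_of_injective _ (mul_left_injective₀ hy0),
        hprim.card_nthRootsFinset, hz1]
      norm_num
    · have hz1 : z ≠ 1 := fun h => hcube (aux_cube_of_char_eq_one χ₃ hχ₃ ht (hz ▸ h))
      have hfil : (univ.filter fun x : F => x ^ 3 = t) = ∅ := by
        rw [Finset.filter_eq_empty_iff]
        intro x _
        exact fun h => hcube ⟨x, h⟩
      have hfac : (z - 1) * (1 + z + z ^ 2) = 0 := by
        have : (z - 1) * (1 + z + z ^ 2) = z ^ 3 - 1 := by ring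
        rw [this, hz3, sub_self]
      rcases mul_eq_zero.mp hfac with h | h
      · exact absurd (sub_eq_zero.mp h) hz1
      · rw [hfil, h]
        simp


end Aux

/-- If `q ≡ 1 (mod 3)` and `S` has order not in `{1,3,4}`, then
`(Σ_x S((x-1)(x²+1/3)))² = q²·S(64/729)·(C(S,χ₃)+C(S,χ₃²))²`. -/
theorem stmt16 (F : Type*) [Field F] [Fintype F]
    (hodd : Odd (Fintype.card F)) (hq : Fintype.card F % 3 = 1)
    (S : MulChar F ℂ) (hS1 : orderOf S ≠ 1) (hS3 : orderOf S ≠ 3) (hS4 : orderOf S ≠ 4)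
    (χ₃ : MulChar F ℂ) (hχ₃ : orderOf χ₃ = 3) :
    (∑ x : F, S ((x - 1) * (x ^ 2 + (3 : F)⁻¹))) ^ 2 =
      (Fintype.card F : ℂ) ^ 2 * S ((64 : F) / 729) *
        (greeneBinom S χ₃ + greeneBinom S (χ₃ ^ 2)) ^ 2 := by
  classical
  have q1 : 1 < Fintype.card F := Fintype.one_lt_card
  have h3F : (3 : F) ≠ 0 := by
    have := aux_prime_ne_zero (F := F) Nat.prime_three (by omega)
    simpa using this
  have h2F : (2 : F) ≠ 0 := by
    have h2 : ¬ (2 ∣ Fintype.card F) := by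
      rw [Nat.odd_iff] at hodd; omega
    have := aux_prime_ne_zero (F := F) Nat.prime_two h2
    simpa using this
  have h27 : (27 : F) ≠ 0 := by
    have h : (27 : F) = 3 ^ 3 := by norm_num
    rw [h]; exact pow_ne_zero _ h3F
  have h8 : (8 : F) ≠ 0 := by
    have h : (8 : F) = 2 ^ 3 := by norm_num
    rw [h]; exact pow_ne_zero _ h2F
  have hSne : S ≠ 1 := fun h => hS1 (by rw [h, orderOf_one])
  have hqC : (Fintype.card F : ℂ) ≠ 0 := Nat.cast_ne_zero.mpr (by omega)
  set c : F := -(8 / 27) with hc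
  have hc0 : c ≠ 0 := by
    simp only [hc, neg_ne_zero, div_ne_zero_iff]
    exact ⟨h8, h27⟩
  have hχpow : χ₃ ^ 3 = 1 := hχ₃ ▸ pow_orderOf_eq_one χ₃
  have hcube1 : ∀ (ψ : MulChar F ℂ), ψ ^ 3 = 1 → ∀ {x : F}, x ≠ 0 → ψ (x ^ 3) = 1 := by
    intro ψ hψ x hx
    rw [map_pow, ← MulChar.pow_apply' ψ (by norm_num : (3:ℕ) ≠ 0), hψ,
      MulChar.one_apply (isUnit_iff_ne_zero.mpr hx)]
  have hmc : -c = ((2:F)/3) ^ 3 := by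
    rw [hc, neg_neg, div_pow]
    norm_num
  have hχ2pow : (χ₃ ^ 2) ^ 3 = 1 := by
    rw [← pow_mul, show 2 * 3 = 3 * 2 from rfl, pow_mul, hχpow, one_pow]
  have hχc : χ₃ (-c) = 1 := by
    rw [hmc]; exact hcube1 χ₃ hχpow (div_ne_zero h2F h3F)
  have hχ2c : (χ₃ ^ 2) (-c) = 1 := by
    rw [hmc]; exact hcube1 (χ₃ ^ 2) hχ2pow (div_ne_zero h2F h3F)
  have hχm1 : χ₃ (-1 : F) = 1 := by
    have hz2 : χ₃ (-1 : F) ^ 2 = 1 := by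
      rw [← map_pow]; norm_num
    have hz3 : χ₃ (-1 : F) ^ 3 = 1 := by
      rw [← MulChar.pow_apply' _ (by norm_num : (3:ℕ) ≠ 0), hχpow,
        MulChar.one_apply (isUnit_iff_ne_zero.mpr (by norm_num : (-1:F) ≠ 0))]
    rw [pow_succ, hz2, one_mul] at hz3
    exact hz3
  have hχ2m1 : (χ₃ ^ 2) (-1 : F) = 1 := by
    rw [MulChar.pow_apply' _ (by norm_num : (2:ℕ) ≠ 0), hχm1, one_pow]
  have hinv1 : χ₃⁻¹ = χ₃ ^ 2 := inv_eq_of_mul_eq_one_right (by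
    rw [← pow_succ']; exact hχpow)
  have hinv2 : (χ₃ ^ 2)⁻¹ = χ₃ := inv_eq_of_mul_eq_one_right (by
    rw [← pow_succ]; exact hχpow)
  -- Step A : substitution x = y + 1/3
  have stepA : ∑ x : F, S ((x - 1) * (x ^ 2 + (3:F)⁻¹)) = ∑ y : F, S (y ^ 3 + c) := by
    refine (Fintype.sum_equiv (Equiv.addRight ((3:F)⁻¹)) _ _ fun y => ?_).symm
    have he : (Equiv.addRight ((3:F)⁻¹)) y = y + (3:F)⁻¹ := rfl
    rw [he]
    congr 1
    rw [hc]
    field_simp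
    ring
  -- Step B : fiberwise sum
  have stepB : ∑ y : F, S (y ^ 3 + c)
      = ∑ t : F, ((univ.filter fun y : F => y ^ 3 = t).card : ℂ) * S (t + c) := by
    rw [← Finset.sum_fiberwise univ (fun y : F => y ^ 3) (fun y => S (y ^ 3 + c))]
    refine Finset.sum_congr rfl fun t _ => ?_
    calc ∑ y ∈ univ.filter (fun y : F => y ^ 3 = t), S (y ^ 3 + c)
        = ∑ y ∈ univ.filter (fun y : F => y ^ 3 = t), S (t + c) :=
          Finset.sum_congr rfl fun y hy => by rw [(Finset.mem_filter.mp hy).2]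
      _ = _ := by rw [Finset.sum_const, nsmul_eq_mul]
  -- key: Jacobi sum reindex
  have keyJ : ∀ ψ : MulChar F ℂ, ∑ x : F, ψ x * S (1 - x) = jacSum S ψ := by
    intro ψ
    rw [jacSum]
    refine Fintype.sum_equiv (Equiv.subLeft (1:F)) _ _ fun x => ?_
    have he : (Equiv.subLeft (1:F)) x = 1 - x := rfl
    rw [he]
    have h2 : (1:F) - (1 - x) = x := by ring
    rw [h2]
    ring
  have keyL : ∀ ψ : MulChar F ℂ, ∑ t : F, ψ t * S (t + c) = ψ (-c) * S c * jacSum S ψ := by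
    intro ψ
    rw [← keyJ ψ, Finset.mul_sum]
    refine (Fintype.sum_equiv (Equiv.mulLeft₀ (-c) (neg_ne_zero.mpr hc0)) _ _ fun x => ?_).symm
    have he : (Equiv.mulLeft₀ (-c) (neg_ne_zero.mpr hc0)) x = -c * x := rfl
    rw [he, map_mul]
    have harg : -c * x + c = c * (1 - x) := by ring
    rw [harg, map_mul]
    ring
  -- L for trivial character
  have L1 : ∑ t : F, (1 : MulChar F ℂ) t * S (t + c) = - S c := by
    have hpt : ∀ t : F, (1 : MulChar F ℂ) t * S (t + c)
        = S (t + c) - (if t = 0 then S c else 0) := by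
      intro t
      rcases eq_or_ne t 0 with rfl | ht
      · rw [MulChar.map_nonunit _ (by simp), zero_mul, if_pos rfl, zero_add, sub_self]
      · rw [MulChar.one_apply (isUnit_iff_ne_zero.mpr ht), one_mul, if_neg ht, sub_zero]
    rw [Finset.sum_congr rfl fun t _ => hpt t, Finset.sum_sub_distrib]
    have hz : ∑ t : F, S (t + c) = 0 := by
      rw [show ∑ t : F, S (t + c) = ∑ u : F, S u from
        Fintype.sum_equiv (Equiv.addRight c) _ _ fun t => rfl]
      exact MulChar.sum_eq_zero_of_ne_one hSne
    rw [hz, Finset.sum_ite_eq' univ (0:F) (fun _ => S c), if_pos (Finset.mem_univ _)]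
    ring
  -- main evaluation
  have main1 : ∑ x : F, S ((x - 1) * (x ^ 2 + (3:F)⁻¹))
      = (Fintype.card F : ℂ) * S c * (greeneBinom S χ₃ + greeneBinom S (χ₃ ^ 2)) := by
    rw [stepA, stepB]
    have hsplit : ∑ t : F, ((univ.filter fun y : F => y ^ 3 = t).card : ℂ) * S (t + c)
        = (∑ t : F, (if t = 0 then S (t + c) else 0))
          + ∑ j ∈ range 3, ∑ t : F, (χ₃ ^ j) t * S (t + c) := by
      calc ∑ t : F, ((univ.filter fun y : F => y ^ 3 = t).card : ℂ) * S (t + c)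
          = ∑ t : F, (((if t = 0 then (1:ℂ) else 0) + ∑ j ∈ range 3, (χ₃ ^ j) t) * S (t + c)) :=
            Finset.sum_congr rfl fun t _ => by rw [aux_count χ₃ hχ₃ t]
        _ = ∑ t : F, ((if t = 0 then (1:ℂ) else 0) * S (t + c)
              + ∑ j ∈ range 3, (χ₃ ^ j) t * S (t + c)) :=
            Finset.sum_congr rfl fun t _ => by rw [add_mul, Finset.sum_mul]
        _ = (∑ t : F, (if t = 0 then (1:ℂ) else 0) * S (t + c))
              + ∑ t : F, ∑ j ∈ range 3, (χ₃ ^ j) t * S (t + c) := Finset.sum_add_distrib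
        _ = (∑ t : F, (if t = 0 then S (t + c) else 0))
              + ∑ j ∈ range 3, ∑ t : F, (χ₃ ^ j) t * S (t + c) := by
            rw [Finset.sum_comm]
            congr 1
            refine Finset.sum_congr rfl fun t _ => ?_
            rw [ite_mul, one_mul, zero_mul]
    rw [hsplit]
    rw [Finset.sum_ite_eq' univ (0:F) (fun t => S (t + c)), if_pos (Finset.mem_univ _), zero_add]
    rw [Finset.sum_range_succ, Finset.sum_range_succ, Finset.sum_range_one]
    rw [pow_zero, pow_one, L1, keyL χ₃, keyL (χ₃ ^ 2), hχc, hχ2c]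
    have hg1 : jacSum S χ₃ = (Fintype.card F : ℂ) * greeneBinom S (χ₃ ^ 2) := by
      rw [greeneBinom, hinv2, hχ2m1]
      field_simp
    have hg2 : jacSum S (χ₃ ^ 2) = (Fintype.card F : ℂ) * greeneBinom S χ₃ := by
      rw [greeneBinom, hinv1, hχm1]
      field_simp
    rw [hg1, hg2]
    ring
  rw [main1]
  have hS64 : S ((64 : F) / 729) = S c ^ 2 := by
    rw [← map_pow]
    congr 1
    rw [hc, neg_pow, div_pow]
    norm_num
  rw [hS64]
  ring
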